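/- Let $k < l$ and $m \geq 2l$. The map sending $c_i \mapsto c_i$ for $1 \leq i \leq k$ and $c_i \mapsto 0$ for $k < i \leq l$ induces a well-defined surjective graded ring homomorphism $\mathbb{Q}[c_1,\dots,c_l]/\langle h_{m-l+1},\dots,h_m\rangle \to \mathbb{Q}[c_1,\dots,c_k]/\langle h_{m-l+1},\dots,h_{m-l+k}\rangle$. -/

import Mathlib

open MvPolynomial

noncomputable section

/-- The weight function giving `cᵢ` (the variable `X ⟨i-1⟩`) degree `2i`. -/
def gradWt (k : ℕ) : Fin k → ℕ := fun i => 2 * (i.1 + 1)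

/-- `hp k r` is the degree-`2r` homogeneous component of the formal inverse of
`1 + c₁ + ⋯ + c_k` in `ℚ[c₁,…,c_k]`, given by `h₀ = 1` and the recursion
`h_r = -(c₁ h_{r-1} + ⋯ + c_k h_{r-k})` (terms with negative index omitted). -/
def hp (k : ℕ) : ℕ → MvPolynomial (Fin k) ℚ
  | 0 => 1
  | (r + 1) => -∑ i : Fin k, if i.1 ≤ r then X i * hp k (r - i.1) else 0
  termination_by r => r
  decreasing_by simp_all <;> omega

/-- The ideal `⟨h_{n-k+1},…,h_n⟩` of the Borel presentation of `H^*(G_k(ℂⁿ);ℚ)`. -/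
def gIdeal (n k : ℕ) : Ideal (MvPolynomial (Fin k) ℚ) :=
  Ideal.span ((fun j => hp k (n - k + j)) '' Set.Icc 1 k)

/-- The rational cohomology ring of the Grassmannian `G_k(ℂⁿ)`,
`A_{n,k} = ℚ[c₁,…,c_k]/⟨h_{n-k+1},…,h_n⟩`. -/
abbrev Ank (n k : ℕ) : Type := MvPolynomial (Fin k) ℚ ⧸ gIdeal n k

/-- The substitution `cᵢ ↦ cᵢ` for `i ≤ k` and `cᵢ ↦ 0` for `i > k`,
as a ring homomorphism `ℚ[c₁,…,c_l] → ℚ[c₁,…,c_k]`. -/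
def lowerVars (l k : ℕ) : MvPolynomial (Fin l) ℚ →+* MvPolynomial (Fin k) ℚ :=
  (MvPolynomial.aeval fun i : Fin l =>
    if h : i.1 < k then (X ⟨i.1, h⟩ : MvPolynomial (Fin k) ℚ) else 0).toRingHom

/-- for `k < l`, `m ≥ 2l`, the substitution `cᵢ ↦ cᵢ` (`i ≤ k`),
`cᵢ ↦ 0` (`k < i ≤ l`) induces a well-defined surjective graded ring homomorphism
`ℚ[c₁,…,c_l]/⟨h_{m-l+1},…,h_m⟩ → ℚ[c₁,…,c_k]/⟨h_{m-l+1},…,h_{m-l+k}⟩`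
(the target ring is `Ank (m-l+k) k`, whose defining ideal is generated by
`h_{m-l+1},…,h_{m-l+k}` in `ℚ[c₁,…,c_k]`). -/
lemma lowerVars_X (l k : ℕ) (i : Fin l) :
    lowerVars l k (X i) = if h : i.1 < k then X ⟨i.1, h⟩ else 0 := by
  simp [lowerVars]

lemma lowerVars_hp (l k : ℕ) (hkl : k ≤ l) : ∀ r, lowerVars l k (hp l r) = hp k r := by
  intro r
  induction r using Nat.strong_induction_on with
  | _ r ih =>
    match r with
    | 0 => simp [hp]
    | r + 1 =>
      rw [hp, map_neg, map_sum, hp, neg_inj]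
      set F : ℕ → MvPolynomial (Fin k) ℚ := fun j =>
        if h : j < k then (if j ≤ r then X (⟨j, h⟩ : Fin k) * hp k (r - j) else 0) else 0
        with hF
      have key : ∀ i : Fin l,
          lowerVars l k (if i.1 ≤ r then X i * hp l (r - i.1) else 0) = F i.1 := by
        intro i
        by_cases h : i.1 ≤ r
        · simp only [h, if_true, map_mul, lowerVars_X, ih (r - i.1) (by omega), hF]
          by_cases hk : i.1 < k <;> simp [hk, h]
        · simp [h, hF]
      calc ∑ i : Fin l, lowerVars l k (if i.1 ≤ r then X i * hp l (r - i.1) else 0)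
          = ∑ i : Fin l, F i.1 := by simp_rw [key]
        _ = ∑ j ∈ Finset.range l, F j := Fin.sum_univ_eq_sum_range F l
        _ = ∑ j ∈ Finset.range k, F j := by
            refine (Finset.sum_subset (Finset.range_subset_range.2 hkl) ?_).symm
            intro j _ hj
            simp only [Finset.mem_range, not_lt] at hj
            simp [hF, Nat.not_lt.2 hj]
        _ = ∑ i : Fin k, F i.1 := (Fin.sum_univ_eq_sum_range F k).symm
        _ = ∑ i : Fin k, (if i.1 ≤ r then X i * hp k (r - i.1) else 0) := by
            refine Finset.sum_congr rfl fun i _ => ?_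
            simp [hF, i.2]

lemma hp_mem (n k : ℕ) : ∀ r, n - k + 1 ≤ r → hp k r ∈ gIdeal n k := by
  intro r
  induction r using Nat.strong_induction_on with
  | _ r ih =>
    intro hr
    by_cases hrn : r ≤ n - k + k
    · have : hp k r = hp k (n - k + (r - (n - k))) := by congr 1; omega
      rw [this]
      exact Ideal.subset_span ⟨r - (n - k), by constructor <;> omega, rfl⟩
    · match r, hr with
      | r + 1, hr =>
        rw [hp]
        refine neg_mem (Ideal.sum_mem _ fun i _ => ?_)
        by_cases h : i.1 ≤ r
        · simp only [h, if_true]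
          exact Ideal.mul_mem_left _ _ (ih (r - i.1) (by omega) (by have := i.2; omega))
        · simp [h]

theorem restriction_surjection_lower_k (k l m : ℕ) (hk : 1 ≤ k) (hkl : k < l)
    (hm : 2 * l ≤ m) :
    ∃ f : Ank m l →+* Ank (m - l + k) k, Function.Surjective f ∧
      ∀ p : MvPolynomial (Fin l) ℚ,
        f (Ideal.Quotient.mk (gIdeal m l) p)
          = Ideal.Quotient.mk (gIdeal (m - l + k) k) (lowerVars l k p) := by
  have hml : l ≤ m := by omega
  have hker : ∀ a ∈ gIdeal m l,
      ((Ideal.Quotient.mk (gIdeal (m - l + k) k)).comp (lowerVars l k)) a = 0 := by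
    intro a ha
    rw [RingHom.comp_apply, Ideal.Quotient.eq_zero_iff_mem]
    have hle : gIdeal m l ≤ (gIdeal (m - l + k) k).comap (lowerVars l k) := by
      rw [gIdeal, Ideal.span_le]
      rintro x ⟨j, hj, rfl⟩
      simp only [Set.mem_Icc] at hj
      simp only [SetLike.mem_coe, Ideal.mem_comap]
      rw [lowerVars_hp l k hkl.le]
      exact hp_mem (m - l + k) k (m - l + j) (by omega)
    exact hle ha
  refine ⟨Ideal.Quotient.lift _ _ hker, ?_, fun p => Ideal.Quotient.lift_mk _ _ _⟩
  intro y
  obtain ⟨q, rfl⟩ := Ideal.Quotient.mk_surjective y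
  refine ⟨Ideal.Quotient.mk _ (rename (Fin.castLE hkl.le) q), ?_⟩
  rw [Ideal.Quotient.lift_mk, RingHom.comp_apply]
  congr 1
  show (aeval fun i : Fin l =>
    if h : i.1 < k then (X ⟨i.1, h⟩ : MvPolynomial (Fin k) ℚ) else 0) (rename (Fin.castLE hkl.le) q) = q
  rw [aeval_rename]
  have : ((fun i : Fin l => if h : i.1 < k then (X ⟨i.1, h⟩ : MvPolynomial (Fin k) ℚ) else 0)
      ∘ Fin.castLE hkl.le) = X := by
    funext i
    simp [Fin.castLE, i.2]
  rw [this]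
  simp [aeval_X_left]
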